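/- Let T, σ > 0 and μ > ρ. Then Φ((σ² + 2ρ − 2μ)√T/(2σ))·exp(ρT) + Φ((σ² − 2ρ + 2μ)√T/(2σ))·exp(μT) > exp(μT), where Φ is the standard normal cumulative distribution function. -/

import Mathlib

noncomputable def stdNormalCDF (z : ℝ) : ℝ :=
  ∫ s in Set.Iic z, (Real.sqrt (2 * Real.pi))⁻¹ * Real.exp (-s ^ 2 / 2)

open MeasureTheory Real Set

noncomputable def phi (s : ℝ) : ℝ := (Real.sqrt (2 * Real.pi))⁻¹ * Real.exp (-s ^ 2 / 2)

lemma phi_eq (s : ℝ) : phi s = (Real.sqrt (2 * Real.pi))⁻¹ * Real.exp (-(1/2) * s ^ 2) := by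
  unfold phi; ring_nf

lemma phi_integrable : Integrable phi := by
  have h := (integrable_exp_neg_mul_sq (by norm_num : (0:ℝ) < 1/2)).const_mul
    (Real.sqrt (2 * Real.pi))⁻¹
  exact h.congr (by filter_upwards with s; rw [phi_eq])

lemma phi_total : ∫ s, phi s = 1 := by
  have h := integral_gaussian (1/2 : ℝ)
  have : ∫ s, phi s = (Real.sqrt (2 * Real.pi))⁻¹ * ∫ s : ℝ, Real.exp (-(1/2) * s ^ 2) := by
    simp_rw [phi_eq]; rw [integral_const_mul]
  rw [this, h, show (π / (1/2 : ℝ)) = 2 * π by ring, inv_mul_cancel₀]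
  positivity

lemma refl_integrable (u : ℝ) : Integrable (fun t => phi (2*u - t)) :=
  ((Measure.measurePreserving_sub_left volume (2*u)).integrable_comp_emb
    (MeasurableEquiv.subLeft (2*u)).measurableEmbedding).2 phi_integrable

lemma key (u v : ℝ) (hu : 0 < u) (hv : 0 < v) :
    Real.exp (2*u*v) * ∫ s in Set.Ioi (u+v), phi s < ∫ t in Set.Iic (u-v), phi t := by
  have h1 : ∫ s in Set.Ioi (u+v), phi s = ∫ t in Set.Iic (u-v), phi (2*u - t) := by
    rw [← integral_Ici_eq_integral_Ioi,
      show Set.Ici (u+v) = (fun t => 2*u - t) '' Set.Iic (u-v) by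
        rw [Set.image_const_sub_Iic]; ring_nf]
    exact (Measure.measurePreserving_sub_left volume (2*u)).setIntegral_image_emb
      (MeasurableEquiv.subLeft (2*u)).measurableEmbedding phi _
  rw [h1]
  set d : ℝ → ℝ := fun t => phi t - Real.exp (2*u*v) * phi (2*u - t) with hd
  have hdint : Integrable d := phi_integrable.sub ((refl_integrable u).const_mul _)
  have hnonneg : ∀ t ∈ Set.Iic (u-v), 0 ≤ d t := by
    intro t ht
    have ht' : t ≤ u - v := ht
    have key2 : Real.exp (2*u*v) * phi (2*u - t) ≤ phi t := by
      unfold phi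
      rw [mul_left_comm, ← Real.exp_add]
      refine mul_le_mul_of_nonneg_left (Real.exp_le_exp.mpr ?_) (by positivity)
      nlinarith [mul_nonneg (by linarith : (0:ℝ) ≤ 2*u) (by linarith : (0:ℝ) ≤ u - v - t)]
    simpa [hd] using sub_nonneg.mpr key2
  have hae : 0 ≤ᵐ[volume.restrict (Set.Iic (u-v))] d := by
    filter_upwards [ae_restrict_mem measurableSet_Iic] with t ht using hnonneg t ht
  have hpos : 0 < ∫ t in Set.Iic (u-v), d t := by
    rw [setIntegral_pos_iff_support_of_nonneg_ae hae hdint.integrableOn]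
    refine lt_of_lt_of_le ?_ (measure_mono (?_ : Set.Iio (u-v) ⊆ _))
    · simp
    · intro t ht
      refine ⟨Function.mem_support.mpr (ne_of_gt ?_), Set.mem_Iic.mpr (le_of_lt ht)⟩
      have ht' : t < u - v := ht
      have key2 : Real.exp (2*u*v) * phi (2*u - t) < phi t := by
        unfold phi
        rw [mul_left_comm, ← Real.exp_add]
        refine mul_lt_mul_of_pos_left (Real.exp_lt_exp.mpr ?_) (by positivity)
        nlinarith [mul_pos (by linarith : (0:ℝ) < 2*u) (by linarith : (0:ℝ) < u - v - t)]
      simpa [hd] using sub_pos.mpr key2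
  have hsub := integral_sub (phi_integrable.integrableOn (s := Set.Iic (u-v)))
    (((refl_integrable u).const_mul (Real.exp (2*u*v))).integrableOn (s := Set.Iic (u-v)))
  rw [hd] at hpos
  rw [hsub, integral_const_mul] at hpos
  linarith

lemma cdf_eq (z : ℝ) : stdNormalCDF z = ∫ s in Set.Iic z, phi s := rfl

theorem stmt_9 (T σ ρ μ : ℝ) (hT : 0 < T) (hσ : 0 < σ) (hρμ : ρ < μ) :
    Real.exp (μ * T) <
      stdNormalCDF ((σ ^ 2 + 2 * ρ - 2 * μ) * Real.sqrt T / (2 * σ)) * Real.exp (ρ * T) +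
      stdNormalCDF ((σ ^ 2 - 2 * ρ + 2 * μ) * Real.sqrt T / (2 * σ)) * Real.exp (μ * T) := by
  have hsT : 0 < Real.sqrt T := Real.sqrt_pos.mpr hT
  set u : ℝ := σ * Real.sqrt T / 2 with hu_def
  set v : ℝ := (μ - ρ) * Real.sqrt T / σ with hv_def
  have hu : 0 < u := by positivity
  have hv : 0 < v := by
    have : 0 < μ - ρ := by linarith
    positivity
  have harg1 : (σ ^ 2 + 2 * ρ - 2 * μ) * Real.sqrt T / (2 * σ) = u - v := by
    rw [hu_def, hv_def]; field_simp; ring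
  have harg2 : (σ ^ 2 - 2 * ρ + 2 * μ) * Real.sqrt T / (2 * σ) = u + v := by
    rw [hu_def, hv_def]; field_simp; ring
  have huv : 2 * u * v = (μ - ρ) * T := by
    rw [hu_def, hv_def]; field_simp
    linear_combination (μ - ρ) * Real.mul_self_sqrt hT.le
  set E : ℝ := ∫ s in Set.Ioi (u + v), phi s with hE
  have hsplit : stdNormalCDF (u + v) = 1 - E := by
    rw [cdf_eq, hE, eq_sub_iff_add_eq,
      intervalIntegral.integral_Iic_add_Ioi phi_integrable.integrableOn phi_integrable.integrableOn, phi_total]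
  have hkey := key u v hu hv
  rw [huv] at hkey
  rw [harg1, harg2, hsplit, cdf_eq]
  have hmul : Real.exp ((μ - ρ) * T) * Real.exp (ρ * T) = Real.exp (μ * T) := by
    rw [← Real.exp_add]; ring_nf
  have h2 : (Real.exp ((μ - ρ) * T) * E) * Real.exp (ρ * T) <
      (∫ t in Set.Iic (u - v), phi t) * Real.exp (ρ * T) :=
    mul_lt_mul_of_pos_right hkey (Real.exp_pos _)
  have h3 : (Real.exp ((μ - ρ) * T) * E) * Real.exp (ρ * T) = E * Real.exp (μ * T) := by
    rw [← hmul]; ring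
  rw [h3] at h2
  nlinarith [Real.exp_pos (μ * T)]
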